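/- arXiv:2201.05637 — 8 statements merged into one kernel-verified Lean document; each statement's English description precedes it below -/
import Mathlib

section
/- If G = H × K is a direct product of finite groups, and ⟨h⟩ is maximal cyclic in H and ⟨k⟩ is maximal cyclic in K, then ⟨(h,k)⟩ is a maximal cyclic subgroup of G. -/
/-- A subgroup is maximal cyclic if it is cyclic and not properly contained
in any cyclic subgroup. -/
def IsMaximalCyclic {G : Type*} [Group G] (C : Subgroup G) : Prop :=
  IsCyclic C ∧ ∀ D : Subgroup G, IsCyclic D → C ≤ D → C = D

/-- η(G): the number of conjugacy classes of maximal cyclic subgroups of `G`. -/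
noncomputable def eta (G : Type*) [Group G] : ℕ :=
  Nat.card (Quot (fun C D : {C : Subgroup G // IsMaximalCyclic C} =>
    ∃ g : G, D.1 = C.1.map (MulAut.conj g).toMonoidHom))

/-- The set of elements generating a non-maximal cyclic subgroup. -/
def Gminus (G : Type*) [Group G] : Set G :=
  {g : G | ¬ IsMaximalCyclic (Subgroup.zpowers g)}

/-- `C` is a maximal cyclic subgroup of `N` (all inside an ambient group). -/
def IsMaximalCyclicIn {G : Type*} [Group G] (N C : Subgroup G) : Prop :=
  C ≤ N ∧ IsCyclic C ∧ ∀ D : Subgroup G, D ≤ N → IsCyclic D → C ≤ D → C = D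

lemma zpowers_isCyclic {G : Type*} [Group G] (g : G) :
    IsCyclic (Subgroup.zpowers g) := by
  refine ⟨⟨g, Subgroup.mem_zpowers g⟩, ?_⟩
  rintro ⟨x, n, rfl⟩
  exact ⟨n, Subtype.ext (by simp)⟩

/-- A cyclic subgroup is the zpowers of some element. -/
lemma cyclic_subgroup_eq_zpowers {G : Type*} [Group G] (D : Subgroup G)
    (hD : IsCyclic D) : ∃ d : G, D = Subgroup.zpowers d := by
  obtain ⟨g, hg⟩ := hD.exists_generator
  refine ⟨(g : G), le_antisymm ?_ ?_⟩
  · intro x hx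
    obtain ⟨n, hn⟩ := hg ⟨x, hx⟩
    exact ⟨n, congrArg Subtype.val hn⟩
  · rw [Subgroup.zpowers_le]
    exact g.2

theorem stmt_1 {H K : Type*} [Group H] [Group K] [Finite H] [Finite K]
    (h : H) (k : K)
    (hh : IsMaximalCyclic (Subgroup.zpowers h))
    (hk : IsMaximalCyclic (Subgroup.zpowers k)) :
    IsMaximalCyclic (Subgroup.zpowers ((h, k) : H × K)) := by
  constructor
  · exact zpowers_isCyclic _
  · intro D hD hle
    obtain ⟨⟨a, b⟩, rfl⟩ := cyclic_subgroup_eq_zpowers D hD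
    have hmem : (h, k) ∈ Subgroup.zpowers ((a, b) : H × K) := hle (Subgroup.mem_zpowers _)
    obtain ⟨n, hn⟩ := hmem
    have hha : Subgroup.zpowers h = Subgroup.zpowers a := by
      apply hh.2 _ (zpowers_isCyclic a)
      rw [Subgroup.zpowers_le]
      exact ⟨n, congrArg Prod.fst hn⟩
    have hkb : Subgroup.zpowers k = Subgroup.zpowers b := by
      apply hk.2 _ (zpowers_isCyclic b)
      rw [Subgroup.zpowers_le]
      exact ⟨n, congrArg Prod.snd hn⟩
    have hoa : orderOf h = orderOf a := by
      rw [← Nat.card_zpowers, ← Nat.card_zpowers, hha]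
    have hob : orderOf k = orderOf b := by
      rw [← Nat.card_zpowers, ← Nat.card_zpowers, hkb]
    apply Subgroup.eq_of_le_of_card_ge hle
    rw [Nat.card_zpowers, Nat.card_zpowers, Prod.orderOf, Prod.orderOf, hoa, hob]
end

section
/- If G = H × K is a direct product of finite groups, then η(G) ≥ η(H)·η(K), where η denotes the number of conjugacy classes of maximal cyclic subgroups. -/
section AuxLemmas

variable {G : Type*} [Group G]

lemma isCyclic_subgroup_iff {C : Subgroup G} :
    IsCyclic C ↔ ∃ g : G, C = Subgroup.zpowers g := by
  constructor
  · rintro ⟨⟨g, hg⟩, hgen⟩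
    refine ⟨g, le_antisymm ?_ ((Subgroup.zpowers_le).mpr hg)⟩
    intro x hx
    obtain ⟨n, hn⟩ := Subgroup.mem_zpowers_iff.mp (hgen ⟨x, hx⟩)
    exact Subgroup.mem_zpowers_iff.mpr ⟨n, by simpa using congrArg Subtype.val hn⟩
  · rintro ⟨g, rfl⟩
    refine ⟨⟨⟨g, Subgroup.mem_zpowers g⟩, ?_⟩⟩
    rintro ⟨x, hx⟩
    obtain ⟨n, hn⟩ := Subgroup.mem_zpowers_iff.mp hx
    exact Subgroup.mem_zpowers_iff.mpr ⟨n, by ext; simpa using hn⟩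

lemma exists_maximalCyclic_above [Finite G] (g : G) :
    ∃ Z : Subgroup G, IsMaximalCyclic Z ∧ Subgroup.zpowers g ≤ Z := by
  have : Finite (Subgroup G) := Finite.of_injective _ SetLike.coe_injective
  have hs : {D : Subgroup G | IsCyclic D ∧ Subgroup.zpowers g ≤ D}.Finite :=
    Set.toFinite _
  obtain ⟨Z, hZ, hZmax⟩ := Set.Finite.exists_maximalFor id _ hs
    ⟨Subgroup.zpowers g, isCyclic_subgroup_iff.mpr ⟨g, rfl⟩, le_rfl⟩
  refine ⟨Z, ⟨hZ.1, fun D hD hle => ?_⟩, hZ.2⟩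
  exact le_antisymm hle (hZmax ⟨hD, le_trans hZ.2 hle⟩ hle)

lemma conj_comp_fst {H K : Type*} [Group H] [Group K] (a : H) (b : K) :
    (MonoidHom.fst H K).comp (MulAut.conj ((a, b) : H × K)).toMonoidHom
      = (MulAut.conj a).toMonoidHom.comp (MonoidHom.fst H K) := by
  ext ⟨x, y⟩ <;> simp

lemma conj_comp_snd {H K : Type*} [Group H] [Group K] (a : H) (b : K) :
    (MonoidHom.snd H K).comp (MulAut.conj ((a, b) : H × K)).toMonoidHom
      = (MulAut.conj b).toMonoidHom.comp (MonoidHom.snd H K) := by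
  ext ⟨x, y⟩ <;> simp

lemma conjRel_equivalence (G : Type*) [Group G] :
    Equivalence (fun C D : {C : Subgroup G // IsMaximalCyclic C} =>
      ∃ g : G, D.1 = C.1.map (MulAut.conj g).toMonoidHom) := by
  constructor
  · intro C
    refine ⟨1, ?_⟩
    ext x
    simp [Subgroup.mem_map]
  · rintro C D ⟨g, hg⟩
    refine ⟨g⁻¹, ?_⟩
    rw [hg, Subgroup.map_map]
    have h' : ∀ x : G, g⁻¹ * (g * x * g⁻¹) * g = x := fun x => by group
    ext x
    simp [Subgroup.mem_map, h']
  · rintro C D E ⟨g, hg⟩ ⟨h, hh⟩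
    refine ⟨h * g, ?_⟩
    rw [hh, hg, Subgroup.map_map]
    have h' : ∀ x : G, h * (g * x * g⁻¹) * h⁻¹ = (h * g) * x * (h * g)⁻¹ :=
      fun x => by group
    ext x
    simp [Subgroup.mem_map, h']

end AuxLemmas

theorem stmt_2 {H K : Type*} [Group H] [Group K] [Finite H] [Finite K] :
    eta H * eta K ≤ eta (H × K) := by
  classical
  set rH := fun C D : {C : Subgroup H // IsMaximalCyclic C} =>
    ∃ g : H, D.1 = C.1.map (MulAut.conj g).toMonoidHom with hrH
  set rK := fun C D : {C : Subgroup K // IsMaximalCyclic C} =>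
    ∃ g : K, D.1 = C.1.map (MulAut.conj g).toMonoidHom with hrK
  set rG := fun C D : {C : Subgroup (H × K) // IsMaximalCyclic C} =>
    ∃ g : H × K, D.1 = C.1.map (MulAut.conj g).toMonoidHom with hrG
  -- key: for any maximal cyclic C in H and D in K, there is a maximal cyclic
  -- subgroup of H × K whose projections are exactly C and D
  have key : ∀ (C : {C : Subgroup H // IsMaximalCyclic C})
      (D : {D : Subgroup K // IsMaximalCyclic D}),
      ∃ Z : {Z : Subgroup (H × K) // IsMaximalCyclic Z},
        Z.1.map (MonoidHom.fst H K) = C.1 ∧ Z.1.map (MonoidHom.snd H K) = D.1 := by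
    rintro ⟨C, hCcyc, hCmax⟩ ⟨D, hDcyc, hDmax⟩
    obtain ⟨h, rfl⟩ := isCyclic_subgroup_iff.mp hCcyc
    obtain ⟨k, rfl⟩ := isCyclic_subgroup_iff.mp hDcyc
    obtain ⟨Z, hZ, hle⟩ := exists_maximalCyclic_above ((h, k) : H × K)
    obtain ⟨z, hzeq⟩ := isCyclic_subgroup_iff.mp hZ.1
    have hmemZ : ((h, k) : H × K) ∈ Z := hle (Subgroup.mem_zpowers _)
    have hfstcyc : IsCyclic (Z.map (MonoidHom.fst H K)) := by
      rw [hzeq, MonoidHom.map_zpowers]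
      exact isCyclic_subgroup_iff.mpr ⟨_, rfl⟩
    have hsndcyc : IsCyclic (Z.map (MonoidHom.snd H K)) := by
      rw [hzeq, MonoidHom.map_zpowers]
      exact isCyclic_subgroup_iff.mpr ⟨_, rfl⟩
    have hfstle : Subgroup.zpowers h ≤ Z.map (MonoidHom.fst H K) :=
      Subgroup.zpowers_le.mpr ⟨(h, k), hmemZ, rfl⟩
    have hsndle : Subgroup.zpowers k ≤ Z.map (MonoidHom.snd H K) :=
      Subgroup.zpowers_le.mpr ⟨(h, k), hmemZ, rfl⟩
    exact ⟨⟨Z, hZ⟩, (hCmax _ hfstcyc hfstle).symm, (hDmax _ hsndcyc hsndle).symm⟩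
  -- the injection
  have hfin : Finite {C : Subgroup (H × K) // IsMaximalCyclic C} := by
    have : Finite (Subgroup (H × K)) := Finite.of_injective _ SetLike.coe_injective
    infer_instance
  have : Finite (Quot rG) := Quot.finite rG
  let F : Quot rH × Quot rK → Quot rG := fun p =>
    Quot.mk rG (key p.1.out p.2.out).choose
  have hF : Function.Injective F := by
    rintro ⟨p1, p2⟩ ⟨q1, q2⟩ hpq
    obtain ⟨hp1, hp2⟩ := (key p1.out p2.out).choose_spec
    obtain ⟨hq1, hq2⟩ := (key q1.out q2.out).choose_spec
    have hrel : rG (key p1.out p2.out).choose (key q1.out q2.out).choose :=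
      ((conjRel_equivalence (H × K)).eqvGen_iff).mp (Quot.eq.mp hpq)
    obtain ⟨⟨a, b⟩, hab⟩ := hrel
    have h1 : rH p1.out q1.out := by
      refine ⟨a, ?_⟩
      rw [← hq1, ← hp1, hab, Subgroup.map_map, Subgroup.map_map, conj_comp_fst,
        ← Subgroup.map_map]
    have h2 : rK p2.out q2.out := by
      refine ⟨b, ?_⟩
      rw [← hq2, ← hp2, hab, Subgroup.map_map, Subgroup.map_map, conj_comp_snd,
        ← Subgroup.map_map]
    have e1 : p1 = q1 := by
      rw [← Quot.out_eq p1, ← Quot.out_eq q1]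
      exact Quot.sound h1
    have e2 : p2 = q2 := by
      rw [← Quot.out_eq p2, ← Quot.out_eq q2]
      exact Quot.sound h2
    simp [e1, e2]
  calc eta H * eta K = Nat.card (Quot rH × Quot rK) := (Nat.card_prod _ _).symm
    _ ≤ Nat.card (Quot rG) := Nat.card_le_card_of_injective F hF
    _ = eta (H × K) := rfl
end

section
/- If G = H × K is a direct product of finite groups with gcd(|H|,|K|) = 1, then η(G) = η(H)·η(K). -/
open Subgroup

section Aux

lemma isCyclic_zpowers' {G : Type*} [Group G] (g : G) : IsCyclic (zpowers g) := by
  refine ⟨⟨⟨g, mem_zpowers g⟩, fun x => ?_⟩⟩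
  obtain ⟨n, hn⟩ := mem_zpowers_iff.mp x.2
  exact ⟨n, Subtype.ext (by simpa using hn)⟩

lemma isCyclic_exists_zpowers {G : Type*} [Group G] {C : Subgroup G} (h : IsCyclic C) :
    ∃ g : G, C = zpowers g := by
  obtain ⟨⟨g, hg⟩, hgen⟩ := h.exists_generator
  refine ⟨g, le_antisymm ?_ ?_⟩
  · intro x hx
    obtain ⟨n, hn⟩ := hgen ⟨x, hx⟩
    exact ⟨n, congrArg Subtype.val hn⟩
  · rintro x ⟨n, rfl⟩
    exact C.zpow_mem hg n

lemma isCyclic_map' {G G' : Type*} [Group G] [Group G'] {C : Subgroup G}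
    (h : IsCyclic C) (f : G →* G') : IsCyclic (C.map f) := by
  obtain ⟨g, rfl⟩ := isCyclic_exists_zpowers h
  rw [MonoidHom.map_zpowers]
  exact isCyclic_zpowers' _

variable {H K : Type*} [Group H] [Group K]

lemma map_fst_prod' (A : Subgroup H) (B : Subgroup K) :
    (A.prod B).map (MonoidHom.fst H K) = A := by
  ext x
  constructor
  · rintro ⟨⟨a, b⟩, ⟨ha, hb⟩, rfl⟩; exact ha
  · intro hx; exact ⟨(x, 1), ⟨hx, B.one_mem⟩, rfl⟩

lemma map_snd_prod' (A : Subgroup H) (B : Subgroup K) :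
    (A.prod B).map (MonoidHom.snd H K) = B := by
  ext x
  constructor
  · rintro ⟨⟨a, b⟩, ⟨ha, hb⟩, rfl⟩; exact hb
  · intro hx; exact ⟨(1, x), ⟨A.one_mem, hx⟩, rfl⟩

lemma conj_prod_map (g : H × K) (A : Subgroup H) (B : Subgroup K) :
    (A.prod B).map (MulAut.conj g).toMonoidHom =
      (A.map (MulAut.conj g.1).toMonoidHom).prod (B.map (MulAut.conj g.2).toMonoidHom) := by
  ext ⟨x, y⟩
  constructor
  · rintro ⟨⟨a, b⟩, ⟨ha, hb⟩, h⟩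
    obtain ⟨h1, h2⟩ := Prod.mk.injEq .. ▸ h
    exact ⟨⟨a, ha, h1⟩, ⟨b, hb, h2⟩⟩
  · rintro ⟨⟨a, ha, h1⟩, ⟨b, hb, h2⟩⟩
    refine ⟨(a, b), ⟨ha, hb⟩, ?_⟩
    simp only [MulEquiv.coe_toMonoidHom, MulAut.conj_apply] at h1 h2 ⊢
    exact Prod.ext (by simpa using h1) (by simpa using h2)

lemma conj_one_map {G : Type*} [Group G] (A : Subgroup G) :
    A.map (MulAut.conj (1 : G)).toMonoidHom = A := by
  ext x
  simp [MulAut.conj]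

variable [Finite H] [Finite K] (hcop : Nat.Coprime (Nat.card H) (Nat.card K))

include hcop

lemma orderOf_coprime' (h : H) (k : K) : Nat.Coprime (orderOf h) (orderOf k) :=
  Nat.Coprime.coprime_dvd_left (orderOf_dvd_natCard h)
    (hcop.coprime_dvd_right (orderOf_dvd_natCard k))

lemma zpowers_pair (h : H) (k : K) :
    zpowers ((h, k) : H × K) = (zpowers h).prod (zpowers k) := by
  refine le_antisymm (zpowers_le.mpr ⟨mem_zpowers h, mem_zpowers k⟩) ?_
  have hco := orderOf_coprime' hcop h k
  have h1 : ((h, 1) : H × K) ∈ zpowers (h, k) := by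
    obtain ⟨N, hN1, hN0⟩ := Nat.chineseRemainder hco 1 0
    refine mem_zpowers_iff.mpr ⟨(N : ℤ), ?_⟩
    rw [zpow_natCast]
    have e1 : h ^ (N : ℕ) = h := by
      have := pow_eq_pow_iff_modEq.mpr (show (N : ℕ) ≡ 1 [MOD orderOf h] by simpa using hN1)
      simpa using this
    have e2 : k ^ (N : ℕ) = 1 := by
      have := pow_eq_pow_iff_modEq.mpr (show (N : ℕ) ≡ 0 [MOD orderOf k] by simpa using hN0)
      simpa using this
    exact Prod.ext e1 e2
  have h2 : ((1, k) : H × K) ∈ zpowers (h, k) := by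
    obtain ⟨N, hN0, hN1⟩ := Nat.chineseRemainder hco 0 1
    refine mem_zpowers_iff.mpr ⟨(N : ℤ), ?_⟩
    rw [zpow_natCast]
    have e1 : h ^ (N : ℕ) = 1 := by
      have := pow_eq_pow_iff_modEq.mpr (show (N : ℕ) ≡ 0 [MOD orderOf h] by simpa using hN0)
      simpa using this
    have e2 : k ^ (N : ℕ) = k := by
      have := pow_eq_pow_iff_modEq.mpr (show (N : ℕ) ≡ 1 [MOD orderOf k] by simpa using hN1)
      simpa using this
    exact Prod.ext e1 e2
  rintro ⟨x, y⟩ ⟨hx, hy⟩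
  obtain ⟨m, rfl⟩ := mem_zpowers_iff.mp hx
  obtain ⟨n, rfl⟩ := mem_zpowers_iff.mp hy
  have : ((h ^ m, k ^ n) : H × K) = ((h, 1) : H × K) ^ m * ((1, k) : H × K) ^ n := by
    simp [Prod.ext_iff]
  rw [this]
  exact mul_mem (zpow_mem h1 m) (zpow_mem h2 n)

lemma cyclic_prod_eq {C : Subgroup (H × K)} (hC : IsCyclic C) :
    C = (C.map (MonoidHom.fst H K)).prod (C.map (MonoidHom.snd H K)) := by
  obtain ⟨g, rfl⟩ := isCyclic_exists_zpowers hC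
  rw [MonoidHom.map_zpowers, MonoidHom.map_zpowers]
  simpa using zpowers_pair hcop g.1 g.2

lemma isCyclic_prod' {A : Subgroup H} {B : Subgroup K} (hA : IsCyclic A) (hB : IsCyclic B) :
    IsCyclic (A.prod B) := by
  obtain ⟨a, rfl⟩ := isCyclic_exists_zpowers hA
  obtain ⟨b, rfl⟩ := isCyclic_exists_zpowers hB
  rw [← zpowers_pair hcop]
  exact isCyclic_zpowers' _

lemma isMaximalCyclic_map_fst {C : Subgroup (H × K)} (hC : IsMaximalCyclic C) :
    IsMaximalCyclic (C.map (MonoidHom.fst H K)) := by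
  obtain ⟨hCc, hmax⟩ := hC
  refine ⟨isCyclic_map' hCc _, fun D hD hle => ?_⟩
  have hE := cyclic_prod_eq hcop hCc
  have h2 : C ≤ D.prod (C.map (MonoidHom.snd H K)) := by
    conv_lhs => rw [hE]
    exact prod_mono hle le_rfl
  have h3 := hmax _ (isCyclic_prod' hcop hD (isCyclic_map' hCc _)) h2
  rw [h3, map_fst_prod']

lemma isMaximalCyclic_map_snd {C : Subgroup (H × K)} (hC : IsMaximalCyclic C) :
    IsMaximalCyclic (C.map (MonoidHom.snd H K)) := by
  obtain ⟨hCc, hmax⟩ := hC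
  refine ⟨isCyclic_map' hCc _, fun D hD hle => ?_⟩
  have hE := cyclic_prod_eq hcop hCc
  have h2 : C ≤ (C.map (MonoidHom.fst H K)).prod D := by
    conv_lhs => rw [hE]
    exact prod_mono le_rfl hle
  have h3 := hmax _ (isCyclic_prod' hcop (isCyclic_map' hCc _) hD) h2
  rw [h3, map_snd_prod']

lemma isMaximalCyclic_prod {A : Subgroup H} {B : Subgroup K}
    (hA : IsMaximalCyclic A) (hB : IsMaximalCyclic B) : IsMaximalCyclic (A.prod B) := by
  refine ⟨isCyclic_prod' hcop hA.1 hB.1, fun D hD hle => ?_⟩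
  have hE := cyclic_prod_eq hcop hD
  have h1 : A ≤ D.map (MonoidHom.fst H K) := by
    rw [← map_fst_prod' A B]; exact map_mono hle
  have h2 : B ≤ D.map (MonoidHom.snd H K) := by
    rw [← map_snd_prod' A B]; exact map_mono hle
  rw [hE, ← hA.2 _ (isCyclic_map' hD _) h1, ← hB.2 _ (isCyclic_map' hD _) h2]

lemma map_fst_conj {C : Subgroup (H × K)} (hC : IsCyclic C) (g : H × K) :
    (C.map (MulAut.conj g).toMonoidHom).map (MonoidHom.fst H K) =
      (C.map (MonoidHom.fst H K)).map (MulAut.conj g.1).toMonoidHom := by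
  rw [cyclic_prod_eq hcop hC, conj_prod_map, map_fst_prod', map_fst_prod']

lemma map_snd_conj {C : Subgroup (H × K)} (hC : IsCyclic C) (g : H × K) :
    (C.map (MulAut.conj g).toMonoidHom).map (MonoidHom.snd H K) =
      (C.map (MonoidHom.snd H K)).map (MulAut.conj g.2).toMonoidHom := by
  rw [cyclic_prod_eq hcop hC, conj_prod_map, map_snd_prod', map_snd_prod']

end Aux

theorem stmt_3 {H K : Type*} [Group H] [Group K] [Finite H] [Finite K]
    (hcop : Nat.Coprime (Nat.card H) (Nat.card K)) :
    eta (H × K) = eta H * eta K := by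
  unfold eta
  rw [← Nat.card_prod]
  refine Nat.card_congr ?_
  refine
    { toFun := Quot.lift
        (fun C => (Quot.mk _ ⟨C.1.map (MonoidHom.fst H K), isMaximalCyclic_map_fst hcop C.2⟩,
                   Quot.mk _ ⟨C.1.map (MonoidHom.snd H K), isMaximalCyclic_map_snd hcop C.2⟩))
        ?_
      invFun := fun p => Quot.lift₂
        (fun A B => Quot.mk _ ⟨A.1.prod B.1, isMaximalCyclic_prod hcop A.2 B.2⟩)
        ?_ ?_ p.1 p.2
      left_inv := ?_
      right_inv := ?_ }
  · rintro C D ⟨g, hg⟩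
    refine Prod.ext ?_ ?_
    · exact Quot.sound ⟨g.1, by simp only [hg]; exact map_fst_conj hcop C.2.1 g⟩
    · exact Quot.sound ⟨g.2, by simp only [hg]; exact map_snd_conj hcop C.2.1 g⟩
  · rintro A B₁ B₂ ⟨k, hk⟩
    refine Quot.sound ⟨((1 : H), k), ?_⟩
    simp only [conj_prod_map, conj_one_map, ← hk]
  · rintro A₁ A₂ B ⟨h, hh⟩
    refine Quot.sound ⟨(h, (1 : K)), ?_⟩
    simp only [conj_prod_map, conj_one_map, ← hh]
  · intro q
    induction q using Quot.ind with
    | _ C =>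
      exact Quot.sound ⟨1, show C.1 =
        (((C.1.map (MonoidHom.fst H K)).prod (C.1.map (MonoidHom.snd H K))).map
          (MulAut.conj (1 : H × K)).toMonoidHom) from by
        rw [conj_one_map]; exact cyclic_prod_eq hcop C.2.1⟩
  · rintro ⟨p₁, p₂⟩
    induction p₁ using Quot.ind with
    | _ A =>
      induction p₂ using Quot.ind with
      | _ B =>
        refine Prod.ext ?_ ?_
        · exact Quot.sound ⟨1, show A.1 =
            ((A.1.prod B.1).map (MonoidHom.fst H K)).map (MulAut.conj (1 : H)).toMonoidHom from by
            rw [conj_one_map, map_fst_prod']⟩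
        · exact Quot.sound ⟨1, show B.1 =
            ((A.1.prod B.1).map (MonoidHom.snd H K)).map (MulAut.conj (1 : K)).toMonoidHom from by
            rw [conj_one_map, map_snd_prod']⟩
end

section
/- Let G = H × K where H is a nontrivial finite nilpotent group and some prime p divides both |H| and |K|. Then η(G) > η(K). -/
open Subgroup

section Aux

variable {G : Type*} [Group G]

lemma aux_isCyclic_zpowers (g : G) : IsCyclic (zpowers g) := by
  constructor
  refine ⟨⟨g, mem_zpowers g⟩, fun x => ?_⟩
  obtain ⟨n, hn⟩ := mem_zpowers_iff.mp x.2
  exact mem_zpowers_iff.mpr ⟨n, Subtype.ext (by simpa using hn)⟩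

lemma aux_exists_zpowers {C : Subgroup G} (h : IsCyclic C) : ∃ c : G, C = zpowers c := by
  obtain ⟨⟨c, hc⟩, hgen⟩ := h.exists_generator
  refine ⟨c, le_antisymm (fun x hx => ?_) (zpowers_le.mpr hc)⟩
  obtain ⟨n, hn⟩ := mem_zpowers_iff.mp (hgen ⟨x, hx⟩)
  exact mem_zpowers_iff.mpr ⟨n, by simpa using congrArg Subtype.val hn⟩

lemma aux_map_isCyclic {N : Type*} [Group N] (f : G →* N) {C : Subgroup G} (h : IsCyclic C) :
    IsCyclic (C.map f) := by
  obtain ⟨c, rfl⟩ := aux_exists_zpowers h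
  rw [MonoidHom.map_zpowers]
  exact aux_isCyclic_zpowers _

lemma aux_conj_conj_inv (C : Subgroup G) (g : G) :
    (C.map (MulAut.conj g).toMonoidHom).map (MulAut.conj g⁻¹).toMonoidHom = C := by
  rw [Subgroup.map_map]
  have h : (MulAut.conj g⁻¹).toMonoidHom.comp (MulAut.conj g).toMonoidHom = MonoidHom.id G := by
    ext x
    simp [MulAut.conj_apply, mul_assoc]
  rw [h, Subgroup.map_id]

lemma aux_isMaximalCyclic_map {C : Subgroup G} (h : IsMaximalCyclic C) (g : G) :
    IsMaximalCyclic (C.map (MulAut.conj g).toMonoidHom) := by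
  refine ⟨aux_map_isCyclic _ h.1, fun D hD hle => ?_⟩
  have h2 : C ≤ D.map (MulAut.conj g⁻¹).toMonoidHom := by
    conv_lhs => rw [← aux_conj_conj_inv C g]
    exact Subgroup.map_mono hle
  have h3 := h.2 _ (aux_map_isCyclic _ hD) h2
  calc C.map (MulAut.conj g).toMonoidHom
      = ((D.map (MulAut.conj g⁻¹).toMonoidHom).map (MulAut.conj g).toMonoidHom) := by
        rw [← h3]
    _ = D := by
        have h4 := aux_conj_conj_inv D g⁻¹
        rwa [inv_inv] at h4

lemma aux_exists_maximal [Finite G] (x : G) :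
    ∃ D : Subgroup G, IsMaximalCyclic D ∧ x ∈ D := by
  haveI : Finite (Subgroup G) :=
    Finite.of_injective (fun S : Subgroup G => (S : Set G)) SetLike.coe_injective
  have hfin : ({D : Subgroup G | IsCyclic D ∧ x ∈ D}).Finite := Set.toFinite _
  have hne : {D : Subgroup G | IsCyclic D ∧ x ∈ D}.Nonempty :=
    ⟨zpowers x, aux_isCyclic_zpowers x, mem_zpowers x⟩
  obtain ⟨D, ⟨hDc, hDx⟩, hmaxi⟩ :=
    Set.Finite.exists_maximalFor (fun S : Subgroup G => Nat.card S) _ hfin hne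
  refine ⟨D, ⟨hDc, fun E hE hle => ?_⟩, hDx⟩
  have hcard : Nat.card D ≤ Nat.card E := Subgroup.card_le_of_le hle
  have heq := hmaxi (j := E) ⟨hE, hle hDx⟩ hcard
  exact Subgroup.eq_of_le_of_card_ge hle heq

lemma aux_card_lt {α β : Type*} [Finite β] (f : β → α) (hf : Function.Surjective f)
    {b₁ b₂ : β} (hne : b₁ ≠ b₂) (heq : f b₁ = f b₂) : Nat.card α < Nat.card β := by
  classical
  have hg : Function.Injective (Function.surjInv hf) := Function.injective_surjInv hf
  have hmiss : ∃ b, b ∉ Set.range (Function.surjInv hf) := by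
    by_contra hc
    push_neg at hc
    obtain ⟨a₁, h1⟩ := hc b₁
    obtain ⟨a₂, h2⟩ := hc b₂
    have e1 : a₁ = f b₁ := by rw [← h1, Function.surjInv_eq hf]
    have e2 : a₂ = f b₂ := by rw [← h2, Function.surjInv_eq hf]
    exact hne (by rw [← h1, ← h2, e1, e2, heq])
  obtain ⟨b, hb⟩ := hmiss
  have hss : Set.range (Function.surjInv hf) ⊂ Set.univ := by
    rw [Set.ssubset_univ_iff]
    intro hu
    exact hb (by rw [hu]; trivial)
  calc Nat.card α = Nat.card (Set.range (Function.surjInv hf)) :=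
        (Nat.card_range_of_injective hg).symm
    _ = (Set.range (Function.surjInv hf)).ncard := Nat.card_coe_set_eq _
    _ < (Set.univ : Set β).ncard := Set.ncard_lt_ncard hss Set.finite_univ
    _ = Nat.card β := by rw [Set.ncard_univ]

lemma aux_not_dvd {p : ℕ} (hp : p.Prime) {K : Type*} [Group K] [Finite K] {k y : K} {n : ℕ}
    {a : ℕ} (hk : (orderOf k).factorization p = a) (ha : 1 ≤ a)
    (hy : (orderOf y).factorization p ≤ a) (h : y ^ n = k) : ¬ p ∣ n := by
  intro hpn
  have hyo : orderOf y ≠ 0 := (orderOf_pos y).ne'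
  have hko : orderOf k ≠ 0 := (orderOf_pos k).ne'
  set g := Nat.gcd (orderOf y) n with hgdef
  have hgdvd : g ∣ orderOf y := Nat.gcd_dvd_left _ _
  have hgne : g ≠ 0 := fun h0 => hyo (Nat.eq_zero_of_gcd_eq_zero_left h0)
  have hordk : orderOf k = orderOf y / g := by rw [← h, orderOf_pow]
  have hmul : orderOf y = orderOf k * g := by
    rw [hordk, Nat.div_mul_cancel hgdvd]
  have hfact : (orderOf y).factorization p = a + g.factorization p := by
    rw [hmul, Nat.factorization_mul hko hgne, Finsupp.add_apply, hk]
  have hle : a + g.factorization p ≤ a := hfact ▸ hy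
  have hg0 : g.factorization p = 0 := by omega
  have hpy : p ∣ orderOf y :=
    (hp.dvd_iff_one_le_factorization hyo).mpr (by rw [hfact]; omega)
  have hpg : p ∣ g := Nat.dvd_gcd hpy hpn
  have : 1 ≤ g.factorization p := (hp.dvd_iff_one_le_factorization hgne).mp hpg
  omega

end Aux

/-- The subtype of maximal cyclic subgroups. -/
abbrev MCS (G : Type*) [Group G] := {C : Subgroup G // IsMaximalCyclic C}

/-- The conjugacy relation on maximal cyclic subgroups. -/
abbrev mcRel (G : Type*) [Group G] : MCS G → MCS G → Prop :=
  fun C D => ∃ g : G, D.1 = C.1.map (MulAut.conj g).toMonoidHom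

lemma aux_map_snd_conj {H K : Type*} [Group H] [Group K] (g : H × K) (C : Subgroup (H × K)) :
    (C.map (MulAut.conj g).toMonoidHom).map (MonoidHom.snd H K) =
    (C.map (MonoidHom.snd H K)).map (MulAut.conj g.2).toMonoidHom := by
  rw [Subgroup.map_map, Subgroup.map_map]
  congr 1

lemma aux_map_fst_conj {H K : Type*} [Group H] [Group K] (g : H × K) (C : Subgroup (H × K)) :
    (C.map (MulAut.conj g).toMonoidHom).map (MonoidHom.fst H K) =
    (C.map (MonoidHom.fst H K)).map (MulAut.conj g.1).toMonoidHom := by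
  rw [Subgroup.map_map, Subgroup.map_map]
  congr 1

theorem main_aux {H K : Type*} [Group H] [Group K] [Finite H] [Finite K]
    {p : ℕ} (hp : p.Prime) (hpH : p ∣ Nat.card H) (hpK : p ∣ Nat.card K) :
    Nat.card (Quot (mcRel K)) < Nat.card (Quot (mcRel (H × K))) := by
  classical
  haveI : Finite (Subgroup (H × K)) :=
    Finite.of_injective (fun S : Subgroup (H × K) => (S : Set (H × K))) SetLike.coe_injective
  set πH := MonoidHom.fst H K with hπH
  set πK := MonoidHom.snd H K with hπK
  obtain ⟨C₀, hC₀, -⟩ := aux_exists_maximal (1 : K)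
  set a₀ : Quot (mcRel K) := Quot.mk _ ⟨C₀, hC₀⟩ with ha₀
  set F : MCS (H × K) → Quot (mcRel K) := fun C =>
    if h : IsMaximalCyclic (C.1.map πK) then Quot.mk _ (⟨C.1.map πK, h⟩ : MCS K) else a₀
    with hF
  have Fcompat : ∀ C D : MCS (H × K), mcRel (H × K) C D → F C = F D := by
    rintro C D ⟨g, hg⟩
    have key : D.1.map πK = (C.1.map πK).map (MulAut.conj g.2).toMonoidHom := by
      rw [hg]; exact aux_map_snd_conj g C.1
    by_cases h : IsMaximalCyclic (C.1.map πK)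
    · have h' : IsMaximalCyclic (D.1.map πK) := by
        rw [key]; exact aux_isMaximalCyclic_map h g.2
      rw [hF]; dsimp only; rw [dif_pos h, dif_pos h']
      exact Quot.sound ⟨g.2, key⟩
    · have h' : ¬ IsMaximalCyclic (D.1.map πK) := by
        intro hD
        have hrev : (D.1.map πK).map (MulAut.conj g.2⁻¹).toMonoidHom = C.1.map πK := by
          rw [key, aux_conj_conj_inv]
        exact h (hrev ▸ aux_isMaximalCyclic_map hD g.2⁻¹)
      rw [hF]; dsimp only; rw [dif_neg h, dif_neg h']
  set ψ : Quot (mcRel (H × K)) → Quot (mcRel K) := Quot.lift F Fcompat with hψ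
  have hsurj : Function.Surjective ψ := by
    intro q
    induction q using Quot.ind with
    | _ C =>
      obtain ⟨C, hC⟩ := C
      obtain ⟨c, rfl⟩ := aux_exists_zpowers hC.1
      obtain ⟨D, hD, hmem⟩ := aux_exists_maximal ((1, c) : H × K)
      have hc_mem : c ∈ D.map πK := ⟨(1, c), hmem, rfl⟩
      have hle : zpowers c ≤ D.map πK := zpowers_le.mpr hc_mem
      have heq : zpowers c = D.map πK := hC.2 _ (aux_map_isCyclic _ hD.1) hle
      refine ⟨Quot.mk _ ⟨D, hD⟩, ?_⟩
      show F ⟨D, hD⟩ = _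
      rw [hF]; dsimp only
      rw [dif_pos (heq ▸ hC)]
      exact congrArg (Quot.mk _) (Subtype.ext heq.symm)
  haveI : Fact p.Prime := ⟨hp⟩
  haveI := Fintype.ofFinite H
  haveI := Fintype.ofFinite K
  obtain ⟨h, hh⟩ := exists_prime_orderOf_dvd_card (G := H) p
    (by rwa [← Nat.card_eq_fintype_card])
  obtain ⟨z₀, hz₀⟩ := exists_prime_orderOf_dvd_card (G := K) p
    (by rwa [← Nat.card_eq_fintype_card])
  obtain ⟨z, -, hz⟩ := Finset.exists_max_image (Finset.univ : Finset K)
    (fun w => (orderOf w).factorization p) ⟨1, Finset.mem_univ 1⟩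
  set a := (orderOf z).factorization p with haa
  have hmax : ∀ w : K, (orderOf w).factorization p ≤ a := fun w => hz w (Finset.mem_univ w)
  have ha1 : 1 ≤ a := by
    have h1 : (orderOf z₀).factorization p = 1 := by
      rw [hz₀, Nat.Prime.factorization_self hp]
    exact h1 ▸ hmax z₀
  obtain ⟨Ck, hCk, hzmem⟩ := aux_exists_maximal z
  obtain ⟨k, rfl⟩ := aux_exists_zpowers hCk.1
  have hka : (orderOf k).factorization p = a := by
    have hdvd : orderOf z ∣ orderOf k := orderOf_dvd_of_mem_zpowers hzmem
    have h1 : p ^ a ∣ orderOf z := Nat.ordProj_dvd _ p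
    have h2 : p ^ a ∣ orderOf k := h1.trans hdvd
    have h3 := (Nat.Prime.pow_dvd_iff_le_factorization hp (orderOf_pos k).ne').mp h2
    exact le_antisymm (hmax k) h3
  obtain ⟨D₁, hD₁, hmem₁⟩ := aux_exists_maximal (((1 : H), k) : H × K)
  obtain ⟨w₁, rfl⟩ := aux_exists_zpowers hD₁.1
  obtain ⟨D₂, hD₂, hmem₂⟩ := aux_exists_maximal ((h, k) : H × K)
  obtain ⟨w₂, rfl⟩ := aux_exists_zpowers hD₂.1
  obtain ⟨n₁, hn₁⟩ := (Submonoid.mem_powers_iff _ _).mp (mem_powers_iff_mem_zpowers.mpr hmem₁)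
  obtain ⟨n₂, hn₂⟩ := (Submonoid.mem_powers_iff _ _).mp (mem_powers_iff_mem_zpowers.mpr hmem₂)
  have hx₁ : w₁.1 ^ n₁ = 1 := by simpa using congrArg Prod.fst hn₁
  have hy₁ : w₁.2 ^ n₁ = k := by simpa using congrArg Prod.snd hn₁
  have hx₂ : w₂.1 ^ n₂ = h := by simpa using congrArg Prod.fst hn₂
  have hy₂ : w₂.2 ^ n₂ = k := by simpa using congrArg Prod.snd hn₂
  have hnd₁ : ¬ p ∣ n₁ := aux_not_dvd hp hka ha1 (hmax w₁.2) hy₁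
  have hpx₁ : ¬ p ∣ orderOf w₁.1 := fun hd => hnd₁ (hd.trans (orderOf_dvd_of_pow_eq_one hx₁))
  have hpx₂ : p ∣ orderOf w₂.1 := by
    have hdvd : orderOf (w₂.1 ^ n₂) ∣ orderOf w₂.1 := orderOf_pow_dvd n₂
    rwa [hx₂, hh] at hdvd
  have hmapK₁ : (zpowers w₁).map πK = zpowers k := by
    rw [hπK, MonoidHom.map_zpowers]
    refine (hCk.2 _ (aux_isCyclic_zpowers _) ?_).symm
    exact zpowers_le.mpr (mem_powers_iff_mem_zpowers.mp ⟨n₁, hy₁⟩)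
  have hmapK₂ : (zpowers w₂).map πK = zpowers k := by
    rw [hπK, MonoidHom.map_zpowers]
    refine (hCk.2 _ (aux_isCyclic_zpowers _) ?_).symm
    exact zpowers_le.mpr (mem_powers_iff_mem_zpowers.mp ⟨n₂, hy₂⟩)
  set χ : MCS (H × K) → ℕ := fun C => Nat.card (C.1.map πH) with hχ
  have χcompat : ∀ C D : MCS (H × K), mcRel (H × K) C D → χ C = χ D := by
    rintro C D ⟨g, hg⟩
    have key : D.1.map πH = (C.1.map πH).map (MulAut.conj g.1).toMonoidHom := by
      rw [hg]; exact aux_map_fst_conj g C.1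
    rw [hχ]; dsimp only; rw [key]
    exact Nat.card_congr
      (Subgroup.equivMapOfInjective _ _ (MulAut.conj g.1).injective).toEquiv
  have hne : Quot.mk (mcRel (H × K)) ⟨zpowers w₁, hD₁⟩ ≠ Quot.mk (mcRel (H × K)) ⟨zpowers w₂, hD₂⟩ := by
    intro hcon
    have hχeq : χ ⟨zpowers w₁, hD₁⟩ = χ ⟨zpowers w₂, hD₂⟩ :=
      congrArg (Quot.lift χ χcompat) hcon
    have e1 : χ ⟨zpowers w₁, hD₁⟩ = orderOf w₁.1 := by
      show Nat.card ((zpowers w₁).map πH) = _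
      rw [hπH, MonoidHom.map_zpowers, Nat.card_zpowers]
      rfl
    have e2 : χ ⟨zpowers w₂, hD₂⟩ = orderOf w₂.1 := by
      show Nat.card ((zpowers w₂).map πH) = _
      rw [hπH, MonoidHom.map_zpowers, Nat.card_zpowers]
      rfl
    rw [e1, e2] at hχeq
    exact hpx₁ (hχeq ▸ hpx₂)
  have heqF : ψ (Quot.mk _ ⟨zpowers w₁, hD₁⟩) = ψ (Quot.mk _ ⟨zpowers w₂, hD₂⟩) := by
    show F ⟨zpowers w₁, hD₁⟩ = F ⟨zpowers w₂, hD₂⟩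
    rw [hF]; dsimp only
    rw [dif_pos (hmapK₁.symm ▸ hCk), dif_pos (hmapK₂.symm ▸ hCk)]
    exact congrArg (Quot.mk _) (Subtype.ext (hmapK₁.trans hmapK₂.symm))
  exact aux_card_lt ψ hsurj hne heqF

theorem stmt_5 {H K : Type*} [Group H] [Group K] [Finite H] [Finite K]
    (hnil : Group.IsNilpotent H) (hHnt : Nontrivial H)
    {p : ℕ} (hp : p.Prime) (hpH : p ∣ Nat.card H) (hpK : p ∣ Nat.card K) :
    eta K < eta (H × K) :=
  main_aux hp hpH hpK
end

section
/- Let N be a normal subgroup of a finite group G. Then η(G) is at least the number of G-orbits on the N-conjugacy classes of maximal cyclic subgroups of N. In particular, distinct G-orbit representatives C₁, C₂ of maximal cyclic subgroups of N cannot both be G-conjugate into the same maximal cyclic subgroup of G. -/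
/-- A subgroup of a cyclic subgroup is cyclic. -/
lemma isCyclic_of_le' {G : Type*} [Group G] {H K : Subgroup G} (h : H ≤ K)
    (hK : IsCyclic K) : IsCyclic H := by
  haveI := hK
  haveI : IsCyclic (H.subgroupOf K) := Subgroup.isCyclic _
  exact isCyclic_of_surjective (Subgroup.subgroupOfEquivOfLe h)
    (Subgroup.subgroupOfEquivOfLe h).surjective

lemma conj_map_map {G : Type*} [Group G] (C : Subgroup G) (a b : G) :
    (C.map (MulAut.conj a).toMonoidHom).map (MulAut.conj b).toMonoidHom
      = C.map (MulAut.conj (b * a)).toMonoidHom := by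
  rw [Subgroup.map_map]
  congr 1
  ext x
  simp [MulAut.conj, mul_assoc]

lemma conj_map_id {G : Type*} [Group G] (C : Subgroup G) :
    C.map (MulAut.conj (1 : G)).toMonoidHom = C := by
  ext x
  simp [MulAut.conj]

/-- The conjugacy relation on subgroups-with-a-property is an equivalence. -/
lemma conj_rel_equiv {G : Type*} [Group G] (P : Subgroup G → Prop) :
    Equivalence (fun C D : {C : Subgroup G // P C} =>
      ∃ g : G, D.1 = C.1.map (MulAut.conj g).toMonoidHom) := by
  constructor
  · intro C
    exact ⟨1, (conj_map_id C.1).symm⟩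
  · rintro C D ⟨g, hg⟩
    refine ⟨g⁻¹, ?_⟩
    rw [hg, conj_map_map, inv_mul_cancel, conj_map_id]
  · rintro C D E ⟨g, hg⟩ ⟨h, hh⟩
    exact ⟨h * g, by rw [hh, hg, conj_map_map]⟩

/-- Every cyclic subgroup of a finite group is contained in a maximal cyclic one. -/
lemma exists_maximalCyclic_ge {G : Type*} [Group G] [Finite G] (C : Subgroup G)
    (hC : IsCyclic C) : ∃ D : Subgroup G, IsMaximalCyclic D ∧ C ≤ D := by
  obtain ⟨D, ⟨hDcyc, hCD⟩, hmax⟩ :=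
    Set.Finite.exists_maximalFor id {D : Subgroup G | IsCyclic D ∧ C ≤ D}
      (Set.toFinite _) ⟨C, hC, le_refl C⟩
  exact ⟨D, ⟨hDcyc, fun E hE hDE => le_antisymm hDE (hmax ⟨hE, hCD.trans hDE⟩ hDE)⟩, hCD⟩

/-- If `C` is maximal cyclic in `N` and contained in a cyclic `D`, then `C = D ⊓ N`. -/
lemma eq_inf_of_maximalCyclicIn {G : Type*} [Group G] {N C D : Subgroup G}
    (hC : IsMaximalCyclicIn N C) (hCD : C ≤ D) (hD : IsCyclic D) : C = D ⊓ N := by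
  exact hC.2.2 (D ⊓ N) inf_le_right (isCyclic_of_le' inf_le_left hD)
    (le_inf hCD hC.1)

lemma map_conj_normal {G : Type*} [Group G] (N : Subgroup G) [hN : N.Normal] (g : G) :
    N.map (MulAut.conj g).toMonoidHom = N := by
  ext x
  constructor
  · rintro ⟨n, hn, rfl⟩
    exact hN.conj_mem n hn g
  · intro hx
    exact ⟨g⁻¹ * x * g, by simpa using hN.conj_mem x hx g⁻¹,
      by simp [MulAut.conj, mul_assoc]⟩

theorem stmt_8 {G : Type*} [Group G] [Finite G] (N : Subgroup G) [N.Normal] :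
    Nat.card (Quot (fun C D : {C : Subgroup G // IsMaximalCyclicIn N C} =>
      ∃ g : G, D.1 = C.1.map (MulAut.conj g).toMonoidHom)) ≤ eta G := by
  classical
  set r₁ := fun C D : {C : Subgroup G // IsMaximalCyclicIn N C} =>
      ∃ g : G, D.1 = C.1.map (MulAut.conj g).toMonoidHom with hr₁
  set r₂ := fun C D : {C : Subgroup G // IsMaximalCyclic C} =>
      ∃ g : G, D.1 = C.1.map (MulAut.conj g).toMonoidHom with hr₂
  -- the choice of a maximal cyclic overgroup
  have hch : ∀ C : {C : Subgroup G // IsMaximalCyclicIn N C},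
      ∃ D : Subgroup G, IsMaximalCyclic D ∧ C.1 ≤ D := fun C =>
    exists_maximalCyclic_ge C.1 C.2.2.1
  choose Dfun hDmax hDle using hch
  unfold eta
  refine Nat.card_le_card_of_injective
    (fun q => Quot.mk r₂ ⟨Dfun q.out, hDmax q.out⟩) ?_
  intro q₁ q₂ hq
  have h2 : r₂ ⟨Dfun q₁.out, hDmax q₁.out⟩ ⟨Dfun q₂.out, hDmax q₂.out⟩ :=
    (Equivalence.eqvGen_iff (conj_rel_equiv _)).mp (Quot.eq.mp hq)
  obtain ⟨g, hg⟩ := h2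
  -- C_i = D_i ⊓ N
  have hc1 : (q₁.out).1 = Dfun q₁.out ⊓ N :=
    eq_inf_of_maximalCyclicIn q₁.out.2 (hDle q₁.out) (hDmax q₁.out).1
  have hc2 : (q₂.out).1 = Dfun q₂.out ⊓ N :=
    eq_inf_of_maximalCyclicIn q₂.out.2 (hDle q₂.out) (hDmax q₂.out).1
  have hr : r₁ q₁.out q₂.out := by
    refine ⟨g, ?_⟩
    rw [hc1, hc2]
    simp only at hg
    rw [hg, Subgroup.map_inf _ _ _ (MulAut.conj g).injective, map_conj_normal N g]
  calc q₁ = Quot.mk r₁ q₁.out := (Quot.out_eq q₁).symm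
    _ = Quot.mk r₁ q₂.out := Quot.sound hr
    _ = q₂ := Quot.out_eq q₂
end

section
/- If N is a central subgroup of a finite group G, then η(G) ≥ η(N). -/
section Aux

variable {G : Type*} [Group G]

lemma isCyclic_of_le {D K : Subgroup G} (hD : IsCyclic D) (h : K ≤ D) : IsCyclic K := by
  haveI : IsCyclic D := hD
  haveI : IsCyclic (K.subgroupOf D) := Subgroup.isCyclic _
  exact isCyclic_of_surjective (Subgroup.subgroupOfEquivOfLe h).toMonoidHom
    (Subgroup.subgroupOfEquivOfLe h).surjective

lemma exists_maximalCyclic_ext [Finite G] (C : Subgroup G) (hC : IsCyclic C) :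
    ∃ D : Subgroup G, IsMaximalCyclic D ∧ C ≤ D := by
  classical
  set S : Set (Subgroup G) := {D | IsCyclic D ∧ C ≤ D} with hS
  have hfin : S.Finite := Set.toFinite _
  have hne : S.Nonempty := ⟨C, hC, le_rfl⟩
  obtain ⟨D, hDS, hmax⟩ := Set.Finite.exists_maximalFor id S hfin hne
  refine ⟨D, ⟨hDS.1, fun E hE hDE => le_antisymm hDE (hmax ⟨hE, hDS.2.trans hDE⟩ hDE)⟩, hDS.2⟩

lemma conj_comp (g h : G) :
    (MulAut.conj h).toMonoidHom.comp (MulAut.conj g).toMonoidHom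
      = (MulAut.conj (h * g)).toMonoidHom := by
  ext x
  simp [mul_assoc]

lemma map_conj_map_conj (C : Subgroup G) (g h : G) :
    (C.map (MulAut.conj g).toMonoidHom).map (MulAut.conj h).toMonoidHom
      = C.map (MulAut.conj (h * g)).toMonoidHom := by
  rw [Subgroup.map_map, conj_comp]

lemma map_conj_one (C : Subgroup G) :
    C.map (MulAut.conj (1 : G)).toMonoidHom = C := by
  ext x
  simp [Subgroup.mem_map]

lemma equiv_conj : Equivalence (fun C D : {C : Subgroup G // IsMaximalCyclic C} =>
    ∃ g : G, D.1 = C.1.map (MulAut.conj g).toMonoidHom) := by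
  constructor
  · intro C; exact ⟨1, (map_conj_one C.1).symm⟩
  · rintro C D ⟨g, hg⟩
    refine ⟨g⁻¹, ?_⟩
    rw [hg, map_conj_map_conj, inv_mul_cancel, map_conj_one]
  · rintro C D E ⟨g, hg⟩ ⟨h, hh⟩
    exact ⟨h * g, by rw [hh, hg, map_conj_map_conj]⟩

/-- Intersecting with a central subgroup is conjugation-invariant. -/
lemma conj_inf_central (N : Subgroup G) (hc : N ≤ Subgroup.center G)
    (D : Subgroup G) (g : G) :
    (D.map (MulAut.conj g).toMonoidHom) ⊓ N = D ⊓ N := by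
  ext x
  simp only [Subgroup.mem_inf, Subgroup.mem_map]
  constructor
  · rintro ⟨⟨y, hy, hyx⟩, hxN⟩
    have hcx := (Subgroup.mem_center_iff.mp (hc hxN)) g
    have h' : g * y * g⁻¹ = x := by simpa using hyx
    have hyx2 : y = x := by
      have h2 : y = g⁻¹ * x * g := by rw [← h']; group
      rw [h2, mul_assoc, ← hcx]; group
    exact ⟨hyx2 ▸ hy, hxN⟩
  · rintro ⟨hxD, hxN⟩
    have hcx := (Subgroup.mem_center_iff.mp (hc hxN)) g
    refine ⟨⟨x, hxD, ?_⟩, hxN⟩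
    simp only [MulEquiv.coe_toMonoidHom, MulAut.conj_apply]
    rw [hcx]; group

/-- Key lemma: a maximal cyclic subgroup of `N` equals `D ⊓ N` for any cyclic
`D` containing it. -/
lemma maxcyc_eq_inf (N : Subgroup G) (C : Subgroup N) (hC : IsMaximalCyclic C)
    (D : Subgroup G) (hD : IsCyclic D) (h : C.map N.subtype ≤ D) :
    C.map N.subtype = D ⊓ N := by
  set E : Subgroup N := (D ⊓ N).comap N.subtype with hE
  have hDNle : D ⊓ N ≤ N := inf_le_right
  have hEcyc : IsCyclic E := by
    have h1 : IsCyclic (D ⊓ N : Subgroup G) := isCyclic_of_le hD inf_le_left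
    have e : ((D ⊓ N).subgroupOf N) ≃* (D ⊓ N : Subgroup G) :=
      Subgroup.subgroupOfEquivOfLe hDNle
    exact isCyclic_of_surjective e.symm.toMonoidHom e.symm.surjective
  have hCE : C ≤ E := by
    intro x hx
    have hxD : (x : G) ∈ D := h (Subgroup.mem_map_of_mem _ hx)
    exact Subgroup.mem_comap.mpr (Subgroup.mem_inf.mpr ⟨hxD, x.2⟩)
  have hCeqE : C = E := hC.2 E hEcyc hCE
  rw [hCeqE, hE, Subgroup.map_comap_eq, Subgroup.range_subtype]
  rw [inf_comm, inf_assoc, inf_idem]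

end Aux

theorem stmt_9 {G : Type*} [Group G] [Finite G] (N : Subgroup G)
    (hc : N ≤ Subgroup.center G) : eta N ≤ eta G := by
  classical
  set rN : {C : Subgroup N // IsMaximalCyclic C} → {C : Subgroup N // IsMaximalCyclic C} → Prop :=
    fun C D => ∃ g : N, D.1 = C.1.map (MulAut.conj g).toMonoidHom with hrN
  set rG : {C : Subgroup G // IsMaximalCyclic C} → {C : Subgroup G // IsMaximalCyclic C} → Prop :=
    fun C D => ∃ g : G, D.1 = C.1.map (MulAut.conj g).toMonoidHom with hrG
  -- conjugation in N is trivial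
  have hNcomm : ∀ (g x : N), g * x * g⁻¹ = x := by
    intro g x
    have := (Subgroup.mem_center_iff.mp (hc x.2)) (g : G)
    ext
    push_cast
    rw [this]; group
  have hrN_eq : ∀ C D, rN C D → C = D := by
    rintro C D ⟨g, hg⟩
    refine Subtype.ext ?_
    rw [hg]
    ext x
    simp only [Subgroup.mem_map, MulEquiv.coe_toMonoidHom, MulAut.conj_apply]
    constructor
    · intro hx; exact ⟨x, hx, hNcomm g x⟩
    · rintro ⟨y, hy, rfl⟩; rwa [hNcomm]
  -- extension map
  have hext : ∀ C : {C : Subgroup N // IsMaximalCyclic C},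
      ∃ D : Subgroup G, IsMaximalCyclic D ∧ C.1.map N.subtype ≤ D := by
    intro C
    apply exists_maximalCyclic_ext
    haveI : IsCyclic C.1 := C.2.1
    exact isCyclic_of_surjective
      (C.1.equivMapOfInjective N.subtype N.subtype_injective).toMonoidHom
      (C.1.equivMapOfInjective N.subtype N.subtype_injective).surjective
  let extD : {C : Subgroup N // IsMaximalCyclic C} → {D : Subgroup G // IsMaximalCyclic D} :=
    fun C => ⟨(hext C).choose, (hext C).choose_spec.1⟩
  have hextle : ∀ C, C.1.map N.subtype ≤ (extD C).1 := fun C => (hext C).choose_spec.2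
  -- the induced map on quotients
  let F : Quot rN → Quot rG :=
    Quot.lift (fun C => Quot.mk rG (extD C))
      (fun C D h => by rw [hrN_eq C D h])
  have hFinj : Function.Injective F := by
    intro q₁ q₂ hq
    obtain ⟨C₁, rfl⟩ := Quot.exists_rep q₁
    obtain ⟨C₂, rfl⟩ := Quot.exists_rep q₂
    have : Quot.mk rG (extD C₁) = Quot.mk rG (extD C₂) := hq
    have hrel : rG (extD C₁) (extD C₂) :=
      (equiv_conj.eqvGen_iff).mp (Quot.eq.mp this)
    obtain ⟨g, hg⟩ := hrel
    have h1 : C₁.1.map N.subtype = (extD C₁).1 ⊓ N :=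
      maxcyc_eq_inf N C₁.1 C₁.2 _ (extD C₁).2.1 (hextle C₁)
    have h2 : C₂.1.map N.subtype = (extD C₂).1 ⊓ N :=
      maxcyc_eq_inf N C₂.1 C₂.2 _ (extD C₂).2.1 (hextle C₂)
    have h3 : C₁.1.map N.subtype = C₂.1.map N.subtype := by
      rw [h1, h2, hg, conj_inf_central N hc]
    have h4 : C₁.1 = C₂.1 := by
      have := congrArg (Subgroup.comap N.subtype) h3
      rwa [Subgroup.comap_map_eq_self_of_injective N.subtype_injective,
        Subgroup.comap_map_eq_self_of_injective N.subtype_injective] at this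
    rw [Subtype.ext h4]
  exact Nat.card_le_card_of_injective F hFinj
end

section
/- For a nontrivial finite group G, η(G) = l(G) − 1 if and only if every nontrivial element of G has prime order, where l(G) is the number of conjugacy classes of cyclic subgroups of G. -/
/-- l(G): the number of conjugacy classes of cyclic subgroups of G. -/
noncomputable def lG (G : Type*) [Group G] : ℕ :=
  Nat.card (Quot (fun C D : {C : Subgroup G // IsCyclic C} =>
    ∃ g : G, D.1 = C.1.map (MulAut.conj g).toMonoidHom))

section helpers
variable {G : Type*} [Group G]

/-- conjugate of a subgroup -/
def cm (g : G) (C : Subgroup G) : Subgroup G := C.map (MulAut.conj g).toMonoidHom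

lemma cm_cm (g h : G) (C : Subgroup G) : cm g (cm h C) = cm (g * h) C := by
  simp only [cm, Subgroup.map_map]
  congr 1
  ext x
  simp [mul_assoc]

lemma cm_one (C : Subgroup G) : cm 1 C = C := by
  ext x
  simp [cm, Subgroup.mem_map]

lemma cm_mono (g : G) {C D : Subgroup G} (h : C ≤ D) : cm g C ≤ cm g D :=
  Subgroup.map_mono h

lemma cm_cyclic (g : G) (C : Subgroup G) [IsCyclic C] : IsCyclic (cm g C) :=
  isCyclic_of_surjective _ (C.equivMapOfInjective _ (MulAut.conj g).injective).surjective

lemma cm_bot (g : G) : cm g (⊥ : Subgroup G) = ⊥ := Subgroup.map_bot _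

lemma cm_eq_bot_iff (g : G) (C : Subgroup G) : cm g C = ⊥ ↔ C = ⊥ :=
  Subgroup.map_eq_bot_iff_of_injective _ (MulAut.conj g).injective

lemma cm_maximal (g : G) {C : Subgroup G} (h : IsMaximalCyclic C) :
    IsMaximalCyclic (cm g C) := by
  obtain ⟨h1, h2⟩ := h
  refine ⟨cm_cyclic g C, fun D hD hle => ?_⟩
  have : IsCyclic (cm g⁻¹ D) := cm_cyclic g⁻¹ D
  have hle' : C ≤ cm g⁻¹ D := by
    have := cm_mono g⁻¹ hle
    rwa [cm_cm, inv_mul_cancel, cm_one] at this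
  have := h2 _ this hle'
  rw [this, cm_cm, mul_inv_cancel, cm_one]

lemma zpowers_cyclic (g : G) : IsCyclic (Subgroup.zpowers g) := by
  refine ⟨⟨g, Subgroup.mem_zpowers g⟩, fun x => ?_⟩
  obtain ⟨k, hk⟩ := x.2
  exact ⟨k, Subtype.ext (by simpa using hk)⟩

end helpers

theorem stmt_17' {G : Type*} [Group G] [Finite G] (hnt : Nontrivial G) :
    Nat.card (Quot (fun C D : {C : Subgroup G // IsMaximalCyclic C} =>
      ∃ g : G, D.1 = cm g C.1)) =
    Nat.card (Quot (fun C D : {C : Subgroup G // IsCyclic C} =>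
      ∃ g : G, D.1 = cm g C.1)) - 1 ↔ ∀ g : G, g ≠ 1 → (orderOf g).Prime := by
  classical
  -- key equivalence between primality and "every nontrivial cyclic is maximal"
  have keyP : (∀ C : Subgroup G, IsCyclic C → C ≠ ⊥ → IsMaximalCyclic C) ↔
      (∀ g : G, g ≠ 1 → (orderOf g).Prime) := by
    constructor
    · intro P g hg
      set n := orderOf g with hn
      have hn1 : n ≠ 1 := by simpa [hn] using hg
      have hn0 : n ≠ 0 := by
        have : IsOfFinOrder g := isOfFinOrder_of_finite g
        simpa [hn] using this.orderOf_pos.ne'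
      set p := n.minFac with hp
      have hpp : p.Prime := Nat.minFac_prime hn1
      have hpd : p ∣ n := Nat.minFac_dvd n
      set h := g ^ (n / p) with hh
      have hord : orderOf h = p := by
        rw [hh, orderOf_pow]
        rw [← hn, Nat.gcd_eq_right (Nat.div_dvd_of_dvd hpd),
          Nat.div_div_self hpd hn0]
      have hh1 : h ≠ 1 := by
        intro e
        apply hpp.one_lt.ne'
        rw [← hord, e, orderOf_one]
      have hbot : Subgroup.zpowers h ≠ ⊥ := by
        simpa [Subgroup.zpowers_eq_bot] using hh1
      have hmax := P _ (zpowers_cyclic h) hbot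
      have hle : Subgroup.zpowers h ≤ Subgroup.zpowers g :=
        Subgroup.zpowers_le.mpr ⟨((n / p : ℕ) : ℤ), by rw [hh]; exact zpow_natCast g (n / p)⟩
      have := hmax.2 _ (zpowers_cyclic g) hle
      have hcard : orderOf h = orderOf g := by
        rw [← Nat.card_zpowers, ← Nat.card_zpowers, this]
      rw [hn, ← hcard, hord]
      exact hpp
    · intro hpr C hC hne
      obtain ⟨⟨c, hcC⟩, hgen⟩ := hC.exists_generator
      have hCeq : C = Subgroup.zpowers c := by
        apply le_antisymm
        · intro x hx
          obtain ⟨k, hk⟩ := hgen ⟨x, hx⟩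
          exact ⟨k, by simpa using congrArg Subtype.val hk⟩
        · exact Subgroup.zpowers_le.mpr hcC
      have hc1 : c ≠ 1 := by
        intro e
        apply hne
        rw [hCeq, e, Subgroup.zpowers_eq_bot]
      refine ⟨hC, fun D hD hle => ?_⟩
      obtain ⟨⟨d, hdD⟩, hgenD⟩ := hD.exists_generator
      have hDeq : D = Subgroup.zpowers d := by
        apply le_antisymm
        · intro x hx
          obtain ⟨k, hk⟩ := hgenD ⟨x, hx⟩
          exact ⟨k, by simpa using congrArg Subtype.val hk⟩
        · exact Subgroup.zpowers_le.mpr hdD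
      have hd1 : d ≠ 1 := by
        intro e
        rw [hDeq, e, Subgroup.zpowers_one_eq_bot] at hle
        exact hne (le_bot_iff.mp hle)
      have hpc := hpr c hc1
      have hpdp := hpr d hd1
      have hdvd : Nat.card C ∣ Nat.card D := Subgroup.card_dvd_of_le hle
      rw [hCeq, hDeq, Nat.card_zpowers, Nat.card_zpowers] at hdvd
      have : orderOf c = orderOf d := by
        rcases (Nat.Prime.eq_one_or_self_of_dvd hpdp _ hdvd) with h | h
        · exact absurd h hpc.ne_one
        · exact h
      apply Subgroup.eq_of_le_of_card_ge hle
      rw [hCeq, hDeq, Nat.card_zpowers, Nat.card_zpowers, this]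
  -- abbreviations
  set RM := (fun C D : {C : Subgroup G // IsMaximalCyclic C} => ∃ g : G, D.1 = cm g C.1)
  set RS := (fun C D : {C : Subgroup G // IsCyclic C} => ∃ g : G, D.1 = cm g C.1)
  have hRSequiv : Equivalence RS := by
    refine ⟨fun C => ⟨1, (cm_one _).symm⟩, ?_, ?_⟩
    · rintro C D ⟨g, hg⟩
      exact ⟨g⁻¹, by rw [hg, cm_cm, inv_mul_cancel, cm_one]⟩
    · rintro C D E ⟨g, hg⟩ ⟨g', hg'⟩
      exact ⟨g' * g, by rw [hg', hg, cm_cm]⟩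
  have hbotC : IsCyclic ((⊥ : Subgroup G)) := Bot.isCyclic
  -- the embedding of maximal classes into cyclic classes
  have hdesc : ∀ (C D : {C : Subgroup G // IsMaximalCyclic C}), RM C D →
      Quot.mk RS ⟨C.1, C.2.1⟩ = Quot.mk RS ⟨D.1, D.2.1⟩ := by
    rintro C D ⟨g, hg⟩
    exact Quot.sound ⟨g, hg⟩
  set F : Quot RM → Quot RS := Quot.lift (fun C => Quot.mk RS ⟨C.1, C.2.1⟩) hdesc with hF
  have hrel_of_eq : ∀ (a b : {C : Subgroup G // IsCyclic C}),
      Quot.mk RS a = Quot.mk RS b → RS a b := fun a b h =>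
    (hRSequiv.eqvGen_iff).mp (Quot.eq.mp h)
  have hFinj : Function.Injective F := by
    intro q q'
    induction q using Quot.ind with | _ C =>
    induction q' using Quot.ind with | _ D =>
    intro h
    obtain ⟨g, hg⟩ := hrel_of_eq _ _ h
    exact Quot.sound ⟨g, hg⟩
  have hbotnotmax : ¬ IsMaximalCyclic (⊥ : Subgroup G) := by
    rintro ⟨-, h⟩
    obtain ⟨g, hg⟩ := exists_ne (1 : G)
    have := (h (Subgroup.zpowers g) (zpowers_cyclic g) bot_le).symm
    rw [Subgroup.zpowers_eq_bot] at this
    exact hg this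
  have hbotne : ∀ q : Quot RM, F q ≠ Quot.mk RS ⟨⊥, hbotC⟩ := by
    intro q
    induction q using Quot.ind with | _ C =>
    intro h
    obtain ⟨g, hg⟩ := hrel_of_eq _ _ h
    simp only at hg
    have hb : C.1 = ⊥ := (cm_eq_bot_iff g _).mp hg.symm
    exact hbotnotmax (hb ▸ C.2)
  haveI finS : Finite (Quot RS) := Quot.finite _
  haveI finM : Finite (Quot RM) := Quot.finite _
  haveI := Fintype.ofFinite (Quot RM)
  haveI := Fintype.ofFinite (Quot RS)
  -- injective map Option (Quot RM) → Quot RS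
  set Ψ : Option (Quot RM) → Quot RS := fun o => o.elim (Quot.mk RS ⟨⊥, hbotC⟩) F with hΨ
  have hΨinj : Function.Injective Ψ := by
    rintro (_ | q) (_ | q') h
    · rfl
    · exact absurd h.symm (hbotne q')
    · exact absurd h (hbotne q)
    · exact congrArg _ (hFinj h)
  constructor
  · -- η = l - 1 → primes
    intro hcount
    rw [← keyP]
    by_contra hP
    push_neg at hP
    obtain ⟨C₀, hC₀cyc, hC₀ne, hC₀notmax⟩ := hP
    -- extend Ψ with the class of C₀
    set Ψ' : Option (Option (Quot RM)) → Quot RS :=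
      fun o => o.elim (Quot.mk RS ⟨C₀, hC₀cyc⟩) Ψ with hΨ'
    have hC₀ne' : ∀ o, Ψ o ≠ Quot.mk RS ⟨C₀, hC₀cyc⟩ := by
      rintro (_ | q) h
      · obtain ⟨g, hg⟩ := hrel_of_eq _ _ h
        simp only at hg
        rw [cm_bot] at hg
        exact hC₀ne hg
      · induction q using Quot.ind with | _ C =>
        obtain ⟨g, hg⟩ := hrel_of_eq _ _ h
        simp only at hg
        exact hC₀notmax (hg ▸ cm_maximal g C.2)
    have hΨ'inj : Function.Injective Ψ' := by
      rintro (_ | o) (_ | o') h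
      · rfl
      · exact absurd h.symm (hC₀ne' o')
      · exact absurd h (hC₀ne' o)
      · exact congrArg _ (hΨinj h)
    have hle2 : Nat.card (Quot RM) + 2 ≤ Nat.card (Quot RS) := by
      have := Nat.card_le_card_of_injective Ψ' hΨ'inj
      rw [Finite.card_option, Finite.card_option] at this
      omega
    omega
  · -- primes → η = l - 1 (Ψ bijective)
    intro hpr
    have hP := keyP.mpr hpr
    have hΨsurj : Function.Surjective Ψ := by
      intro q
      induction q using Quot.ind with | _ C =>
      by_cases hb : C.1 = ⊥
      · refine ⟨none, ?_⟩
        simp only [hΨ, Option.elim]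
        congr 1
        exact Subtype.ext hb.symm
      · exact ⟨some (Quot.mk RM ⟨C.1, hP C.1 C.2 hb⟩), rfl⟩
    have := Nat.card_eq_of_bijective Ψ ⟨hΨinj, hΨsurj⟩
    rw [Finite.card_option] at this
    omega

theorem stmt_17 {G : Type*} [Group G] [Finite G] (hnt : Nontrivial G) :
    eta G = lG G - 1 ↔ ∀ g : G, g ≠ 1 → (orderOf g).Prime := by
  unfold eta lG
  exact stmt_17' hnt
end

section
/- If G is a finite p-group of order pⁿ with n ≥ 2 and exponent p, then η(G) ≥ n + p − 1. -/
/-- The conjugacy relation on maximal cyclic subgroups. -/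
abbrev MCRel (G : Type*) [Group G] :
    {C : Subgroup G // IsMaximalCyclic C} → {C : Subgroup G // IsMaximalCyclic C} → Prop :=
  fun C D => ∃ g : G, D.1 = C.1.map (MulAut.conj g).toMonoidHom

lemma eta_eq (G : Type*) [Group G] : eta G = Nat.card (Quot (MCRel G)) := rfl

section Aux

variable {G : Type*} [Group G] {p : ℕ}

lemma isCyclic_zpowers (a : G) : IsCyclic (Subgroup.zpowers a) := by
  refine ⟨⟨⟨a, Subgroup.mem_zpowers a⟩, fun x => ?_⟩⟩
  obtain ⟨k, hk⟩ := Subgroup.mem_zpowers_iff.mp x.2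
  refine Subgroup.mem_zpowers_iff.mpr ⟨k, Subtype.ext ?_⟩
  simpa using hk

lemma orderOf_eq_p (hp : p.Prime) (hexp : ∀ g : G, g ^ p = 1) {g : G} (hg : g ≠ 1) :
    orderOf g = p := by
  have h := orderOf_dvd_of_pow_eq_one (hexp g)
  rcases (Nat.Prime.eq_one_or_self_of_dvd hp _ h) with h1 | h1
  · exact absurd (orderOf_eq_one_iff.mp h1) hg
  · exact h1

lemma exists_zpowers_of_isCyclic {C : Subgroup G} (h : IsCyclic C) :
    ∃ g : G, C = Subgroup.zpowers g := by
  obtain ⟨⟨g, hg⟩, hgen⟩ := h.exists_generator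
  refine ⟨g, le_antisymm ?_ ((Subgroup.zpowers_le).mpr hg)⟩
  intro x hx
  obtain ⟨k, hk⟩ := Subgroup.mem_zpowers_iff.mp (hgen ⟨x, hx⟩)
  exact Subgroup.mem_zpowers_iff.mpr ⟨k, by simpa using congrArg Subtype.val hk⟩

/-- In a nontrivial finite group of exponent `p`, maximal cyclic subgroups are
exactly the subgroups of order `p`. -/
lemma maxcyclic_iff [Finite G] [Nontrivial G] (hp : p.Prime) (hexp : ∀ g : G, g ^ p = 1)
    (C : Subgroup G) : IsMaximalCyclic C ↔ Nat.card C = p := by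
  constructor
  · rintro ⟨h1, h2⟩
    obtain ⟨g, rfl⟩ := exists_zpowers_of_isCyclic h1
    rcases eq_or_ne g 1 with rfl | hg
    · obtain ⟨a, ha⟩ := exists_ne (1 : G)
      have hle : Subgroup.zpowers (1 : G) ≤ Subgroup.zpowers a := by
        simp [Subgroup.zpowers_one_eq_bot]
      have heq := h2 (Subgroup.zpowers a) (isCyclic_zpowers a) hle
      have : a ∈ Subgroup.zpowers (1 : G) := heq ▸ Subgroup.mem_zpowers a
      rw [Subgroup.zpowers_one_eq_bot, Subgroup.mem_bot] at this
      exact absurd this ha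
    · rw [Nat.card_zpowers]; exact orderOf_eq_p hp hexp hg
  · intro hcard
    have : Fact p.Prime := ⟨hp⟩
    have hcyc : IsCyclic C := isCyclic_of_prime_card hcard
    refine ⟨hcyc, fun D hD hle => ?_⟩
    obtain ⟨g, rfl⟩ := exists_zpowers_of_isCyclic hD
    have hle' : Nat.card (Subgroup.zpowers g) ≤ p := by
      rcases eq_or_ne g 1 with rfl | hg
      · rw [Nat.card_zpowers, orderOf_one]; exact hp.one_lt.le
      · rw [Nat.card_zpowers, orderOf_eq_p hp hexp hg]
    exact Subgroup.eq_of_le_of_card_ge hle (by rw [hcard]; exact hle')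

lemma maxcyclic_zpowers [Finite G] [Nontrivial G] (hp : p.Prime) (hexp : ∀ g : G, g ^ p = 1)
    {a : G} (ha : a ≠ 1) : IsMaximalCyclic (Subgroup.zpowers a) := by
  rw [maxcyclic_iff hp hexp, Nat.card_zpowers]
  exact orderOf_eq_p hp hexp ha

end Aux

section Step

variable {G : Type*} [Group G] [Finite G] {p n : ℕ}

lemma quot_finite (G : Type*) [Group G] [Finite G] : Finite (Quot (MCRel G)) := by
  have : Finite (Subgroup G) := Finite.of_injective _ SetLike.coe_injective
  infer_instance

omit [Finite G] in
lemma normal_zpowers_center {k : G} (hk : k ∈ Subgroup.center G) :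
    (Subgroup.zpowers k).Normal := by
  constructor
  intro x hx g
  have hc := (Subgroup.zpowers_le.mpr hk) hx
  rw [Subgroup.mem_center_iff.mp hc g, mul_assoc, mul_inv_cancel, mul_one]
  exact hx

/-- The key induction step. -/
lemma eta_step (hp : p.Prime) (hn : 2 ≤ n) (hcard : Nat.card G = p ^ n)
    (hexp : ∀ g : G, g ^ p = 1) {k : G} (hk : k ∈ Subgroup.center G) (hk1 : k ≠ 1) :
    haveI := normal_zpowers_center hk
    eta (G ⧸ Subgroup.zpowers k) + 1 ≤ eta G := by
  classical
  haveI := normal_zpowers_center hk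
  set K := Subgroup.zpowers k with hK
  have hpK : Nat.card K = p := by rw [hK, Nat.card_zpowers]; exact orderOf_eq_p hp hexp hk1
  have hGnt : Nontrivial G := by
    apply Finite.one_lt_card_iff_nontrivial.mp
    rw [hcard]; exact Nat.one_lt_pow (by omega) hp.one_lt
  -- cardinality of the quotient
  have hq : Nat.card (G ⧸ K) = p ^ (n - 1) := by
    have h1 : Nat.card G = Nat.card (G ⧸ K) * Nat.card K :=
      Subgroup.card_eq_card_quotient_mul_card_subgroup K
    rw [hpK, hcard] at h1
    have h2 : p ^ n = p ^ (n - 1) * p := by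
      rw [← pow_succ]; congr 1; omega
    rw [h2] at h1
    exact (Nat.eq_of_mul_eq_mul_right hp.pos h1.symm)
  have hqexp : ∀ x : G ⧸ K, x ^ p = 1 := by
    intro x
    obtain ⟨g, rfl⟩ := QuotientGroup.mk'_surjective K x
    rw [← map_pow, hexp, map_one]
  have hqnt : Nontrivial (G ⧸ K) := by
    apply Finite.one_lt_card_iff_nontrivial.mp
    rw [hq]
    exact Nat.one_lt_pow (by omega) hp.one_lt
  -- the map to Option
  set π := QuotientGroup.mk' K with hπ
  set f : {C : Subgroup G // IsMaximalCyclic C} → Option (Quot (MCRel (G ⧸ K))) :=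
    fun C => if h : IsMaximalCyclic (C.1.map π) then some (Quot.mk _ ⟨C.1.map π, h⟩) else none
    with hf
  have hwd : ∀ C D, MCRel G C D → f C = f D := by
    rintro C D ⟨g, hg⟩
    have key : D.1.map π = (C.1.map π).map (MulAut.conj (π g)).toMonoidHom := by
      have hhom : π.comp (MulAut.conj g).toMonoidHom
          = ((MulAut.conj (π g)).toMonoidHom).comp π := by
        ext x
        simp only [MonoidHom.comp_apply, MulEquiv.coe_toMonoidHom, MulAut.conj_apply,
          map_mul, map_inv]
      rw [hg, Subgroup.map_map, Subgroup.map_map, hhom]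
    have hcongr : Nat.card (D.1.map π) = Nat.card (C.1.map π) := by
      rw [key]
      exact (Nat.card_congr
        (Subgroup.equivMapOfInjective _ _ (MulAut.conj (π g)).injective).toEquiv).symm
    have hiff : IsMaximalCyclic (D.1.map π) ↔ IsMaximalCyclic (C.1.map π) := by
      rw [maxcyclic_iff hp hqexp, maxcyclic_iff hp hqexp, hcongr]
    by_cases h : IsMaximalCyclic (C.1.map π)
    · rw [hf]
      simp only
      rw [dif_pos h, dif_pos (hiff.mpr h)]
      exact congrArg some (Quot.sound ⟨π g, key⟩)
    · rw [hf]
      simp only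
      rw [dif_neg h, dif_neg (fun h' => h (hiff.mp h'))]
  set F : Quot (MCRel G) → Option (Quot (MCRel (G ⧸ K))) := Quot.lift f hwd with hF
  have hsurj : Function.Surjective F := by
    rintro (_ | q)
    · refine ⟨Quot.mk _ ⟨K, maxcyclic_zpowers hp hexp hk1⟩, ?_⟩
      show f _ = none
      rw [hf]
      simp only
      rw [dif_neg]
      intro hmc
      have hbot : K.map π = ⊥ := by
        rw [Subgroup.map_eq_bot_iff, hπ, QuotientGroup.ker_mk']
      rw [maxcyclic_iff hp hqexp, hbot, Subgroup.card_bot] at hmc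
      exact hp.one_lt.ne' hmc.symm
    · obtain ⟨⟨Dbar, hDbar⟩⟩ := q.exists_rep
      rename_i hrep
      have hDcard : Nat.card Dbar = p := (maxcyclic_iff hp hqexp Dbar).mp hDbar
      have hDne : Dbar ≠ ⊥ := by
        intro h; rw [h, Subgroup.card_bot] at hDcard; exact hp.one_lt.ne' hDcard.symm
      obtain ⟨⟨xb, hxb⟩, hxb1⟩ := Subgroup.ne_bot_iff_exists_ne_one.mp hDne
      obtain ⟨x, rfl⟩ := QuotientGroup.mk'_surjective K xb
      have hx1 : x ≠ 1 := by
        rintro rfl; exact hxb1 (Subtype.ext (map_one π))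
      have hxbne : π x ≠ 1 := fun h => hxb1 (Subtype.ext h)
      have hmapD : (Subgroup.zpowers x).map π = Dbar := by
        rw [MonoidHom.map_zpowers]
        refine Subgroup.eq_of_le_of_card_ge (Subgroup.zpowers_le.mpr hxb) ?_
        rw [hDcard, Nat.card_zpowers, orderOf_eq_p hp hqexp hxbne]
      refine ⟨Quot.mk _ ⟨Subgroup.zpowers x, maxcyclic_zpowers hp hexp hx1⟩, ?_⟩
      show f _ = some q
      rw [hf]
      simp only
      rw [dif_pos (hmapD ▸ hDbar)]
      rw [← hrep]
      exact congrArg some (congrArg (Quot.mk _) (Subtype.ext hmapD))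
  -- conclude
  have hfin : Finite (Quot (MCRel G)) := quot_finite G
  have hfinq : Finite (Quot (MCRel (G ⧸ K))) := quot_finite (G ⧸ K)
  have hle := Nat.card_le_card_of_surjective F hsurj
  have hopt : Nat.card (Option (Quot (MCRel (G ⧸ K)))) = eta (G ⧸ K) + 1 := by
    have := Fintype.ofFinite (Quot (MCRel (G ⧸ K)))
    rw [eta_eq]
    simp [Nat.card_eq_fintype_card]
  rw [hopt] at hle
  rw [eta_eq, eta_eq] at *
  exact hle

end Step

section Base

variable {G : Type*} [Group G] [Finite G] {p : ℕ}

lemma eta_base (hp : p.Prime) (hcard : Nat.card G = p ^ 2) (hexp : ∀ g : G, g ^ p = 1) :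
    p + 1 ≤ eta G := by
  have hfact : Fact p.Prime := ⟨hp⟩
  have hcomm : ∀ a b : G, a * b = b * a :=
    IsPGroup.commutative_of_card_eq_prime_sq hcard
  have hGnt : Nontrivial G := Finite.one_lt_card_iff_nontrivial.mp
    (by rw [hcard]; exact Nat.one_lt_pow two_ne_zero hp.one_lt)
  have hid : ∀ g : G, (MulAut.conj g).toMonoidHom = MonoidHom.id G := by
    intro g; ext z
    simp only [MulEquiv.coe_toMonoidHom, MulAut.conj_apply, MonoidHom.id_apply]
    rw [hcomm g z, mul_assoc, mul_inv_cancel, mul_one]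
  have hmk_inj : Function.Injective (Quot.mk (MCRel G)) := by
    have h : ∀ C D : {C : Subgroup G // IsMaximalCyclic C}, MCRel G C D → C = D := by
      rintro C D ⟨g, hg⟩
      rw [hid g, Subgroup.map_id] at hg
      exact Subtype.ext hg.symm
    intro C D hCD
    have := congrArg (Quot.lift id h) hCD
    simpa using this
  obtain ⟨b, hb⟩ := exists_ne (1 : G)
  have hob : orderOf b = p := orderOf_eq_p hp hexp hb
  have hbne_top : Subgroup.zpowers b ≠ ⊤ := by
    intro h
    have hcb : Nat.card (Subgroup.zpowers b) = p := by rw [Nat.card_zpowers, hob]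
    rw [h, Subgroup.card_top, hcard, pow_two] at hcb
    nlinarith [hp.one_lt]
  obtain ⟨a, ha⟩ : ∃ a : G, a ∉ Subgroup.zpowers b := by
    by_contra h; push_neg at h
    exact hbne_top ((Subgroup.eq_top_iff' _).mpr h)
  have hane : ∀ i : ℕ, a * b ^ i ≠ 1 := by
    intro i h
    apply ha
    have h' : a = (b ^ i)⁻¹ := by rw [eq_inv_iff_mul_eq_one]; exact h
    rw [h']; exact inv_mem (pow_mem (Subgroup.mem_zpowers b) i)
  have hmem_b : ∀ i : ℕ, a * b ^ i ∉ Subgroup.zpowers b := by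
    intro i h
    apply ha
    have h' : a = (a * b ^ i) * (b ^ i)⁻¹ := (mul_inv_cancel_right a (b ^ i)).symm
    rw [h']; exact mul_mem h (inv_mem (pow_mem (Subgroup.mem_zpowers b) i))
  have hkey : ∀ i j : ℕ, i < j → j < p →
      Subgroup.zpowers (a * b ^ i) ≠ Subgroup.zpowers (a * b ^ j) := by
    intro i j hij hjp heq
    set d := j - i with hd
    have hdpos : 0 < d := by omega
    have hdlt : d < p := by omega
    have hbd1 : b ^ d ≠ 1 := by
      intro h
      have hdvd := orderOf_dvd_of_pow_eq_one h
      rw [hob] at hdvd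
      have := Nat.le_of_dvd hdpos hdvd
      omega
    have hmem1 : a * b ^ j ∈ Subgroup.zpowers (a * b ^ i) := heq ▸ Subgroup.mem_zpowers _
    have hmem0 : a * b ^ i ∈ Subgroup.zpowers (a * b ^ i) := Subgroup.mem_zpowers _
    have hbdmem : b ^ d ∈ Subgroup.zpowers (a * b ^ i) := by
      have h1 : a * b ^ j = (a * b ^ i) * b ^ d := by
        rw [mul_assoc, ← pow_add]; congr 2; omega
      have h2 := mul_mem (inv_mem hmem0) hmem1
      rwa [h1, inv_mul_cancel_left] at h2
    have hcards : Nat.card (Subgroup.zpowers (b ^ d)) = p := by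
      rw [Nat.card_zpowers]; exact orderOf_eq_p hp hexp hbd1
    have hcardi : Nat.card (Subgroup.zpowers (a * b ^ i)) = p := by
      rw [Nat.card_zpowers]; exact orderOf_eq_p hp hexp (hane i)
    have he1 : Subgroup.zpowers (b ^ d) = Subgroup.zpowers (a * b ^ i) :=
      Subgroup.eq_of_le_of_card_ge (Subgroup.zpowers_le.mpr hbdmem)
        (by rw [hcards, hcardi])
    have he2 : Subgroup.zpowers (b ^ d) = Subgroup.zpowers b := by
      refine Subgroup.eq_of_le_of_card_ge
        (Subgroup.zpowers_le.mpr (pow_mem (Subgroup.mem_zpowers b) d)) ?_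
      rw [hcards, Nat.card_zpowers, hob]
    apply hmem_b i
    rw [← he2, he1]
    exact Subgroup.mem_zpowers _
  classical
  set ι : Fin (p + 1) → Quot (MCRel G) := fun i =>
    if h : (i : ℕ) < p then
      Quot.mk _ ⟨Subgroup.zpowers (a * b ^ (i : ℕ)), maxcyclic_zpowers hp hexp (hane i)⟩
    else Quot.mk _ ⟨Subgroup.zpowers b, maxcyclic_zpowers hp hexp hb⟩ with hι
  have hinj : Function.Injective ι := by
    intro i j hij
    by_contra hne
    simp only [hι] at hij
    by_cases hi : (i : ℕ) < p <;> by_cases hj : (j : ℕ) < p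
    · rw [dif_pos hi, dif_pos hj] at hij
      have heq := congrArg Subtype.val (hmk_inj hij)
      have hvne : (i : ℕ) ≠ (j : ℕ) := fun h => hne (Fin.ext h)
      rcases Nat.lt_or_ge (i : ℕ) (j : ℕ) with h | h
      · exact hkey _ _ h hj heq
      · exact hkey _ _ (by omega) hi heq.symm
    · rw [dif_pos hi, dif_neg hj] at hij
      have heq : Subgroup.zpowers (a * b ^ (i : ℕ)) = Subgroup.zpowers b :=
        congrArg Subtype.val (hmk_inj hij)
      exact hmem_b i (heq ▸ Subgroup.mem_zpowers _)
    · rw [dif_neg hi, dif_pos hj] at hij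
      have heq : Subgroup.zpowers b = Subgroup.zpowers (a * b ^ (j : ℕ)) :=
        congrArg Subtype.val (hmk_inj hij)
      exact hmem_b j (heq.symm ▸ Subgroup.mem_zpowers _)
    · exact hne (Fin.ext (by omega))
  have hfin : Finite (Quot (MCRel G)) := quot_finite G
  have hle := Nat.card_le_card_of_injective ι hinj
  rw [eta_eq]
  simpa using hle

end Base

universe u

lemma eta_ge_aux {p : ℕ} (hp : p.Prime) :
    ∀ n : ℕ, 2 ≤ n → ∀ (G : Type u) [Group G] [Finite G],
      Nat.card G = p ^ n → (∀ g : G, g ^ p = 1) → n + p - 1 ≤ eta G := by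
  intro n
  induction n using Nat.strong_induction_on with
  | _ n ih =>
    intro hn G _ _ hcard hexp
    have hp2 := hp.two_le
    rcases eq_or_lt_of_le hn with h2 | h3
    · subst h2
      have := eta_base hp hcard hexp
      omega
    · have hfact : Fact p.Prime := ⟨hp⟩
      have hpg : IsPGroup p G := IsPGroup.of_card hcard
      have hGnt : Nontrivial G := Finite.one_lt_card_iff_nontrivial.mp
        (by rw [hcard]; exact Nat.one_lt_pow (by omega) hp.one_lt)
      have hcnt : Nontrivial (Subgroup.center G) := hpg.center_nontrivial
      obtain ⟨⟨k, hk⟩, hk1⟩ := exists_ne (1 : Subgroup.center G)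
      have hk1' : k ≠ 1 := fun h => hk1 (Subtype.ext h)
      haveI := normal_zpowers_center hk
      have hstep := eta_step hp hn hcard hexp hk hk1'
      have hpK : Nat.card (Subgroup.zpowers k) = p := by
        rw [Nat.card_zpowers]; exact orderOf_eq_p hp hexp hk1'
      have hqcard : Nat.card (G ⧸ Subgroup.zpowers k) = p ^ (n - 1) := by
        have h1 : Nat.card G
            = Nat.card (G ⧸ Subgroup.zpowers k) * Nat.card (Subgroup.zpowers k) :=
          Subgroup.card_eq_card_quotient_mul_card_subgroup _
        rw [hpK, hcard] at h1
        have h2 : p ^ n = p ^ (n - 1) * p := by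
          rw [← pow_succ]; congr 1; omega
        rw [h2] at h1
        exact (Nat.eq_of_mul_eq_mul_right hp.pos h1.symm)
      have hqexp : ∀ x : G ⧸ Subgroup.zpowers k, x ^ p = 1 := by
        intro x
        obtain ⟨g, rfl⟩ := QuotientGroup.mk'_surjective (Subgroup.zpowers k) x
        rw [← map_pow, hexp, map_one]
      have hih := ih (n - 1) (by omega) (by omega) (G ⧸ Subgroup.zpowers k) hqcard hqexp
      omega

theorem stmt_19 {G : Type*} [Group G] [Finite G] {p n : ℕ} (hp : p.Prime)
    (hn : 2 ≤ n) (hcard : Nat.card G = p ^ n) (hexp : ∀ g : G, g ^ p = 1) :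
    n + p - 1 ≤ eta G :=
  eta_ge_aux hp n hn G hcard hexp
end
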